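/- Let D ⊆ ℝⁿ be a bounded measurable set and Ω ⊆ D measurable. Let γ : ℝⁿ × ℝⁿ → ℝ be measurable, symmetric, nonnegative, with ∫_D γ(x,y)² dy ≤ γ₄² for a.e. x ∈ D. For v ∈ L²(D) define (−Lv)(x) := 2∫_D (v(x) − v(y)) γ(x,y) dy and the nonlocal bilinear form a(u,v) := ∫_D∫_D (u(x) − u(y))(v(x) − v(y)) γ(x,y) dy dx. Let V₀ := {v ∈ L²(D) : v = 0 a.e. on D∖Ω} and assume coercivity: there is α > 0 with a(v,v) ≥ α‖v‖²_{L²(D)} for all v ∈ V₀. Let f ∈ L²(D), let ψ ∈ L²(D) with ψ ≤ 0 a.e. on D∖Ω, and set K := {v ∈ V₀ : v ≥ ψ a.e. on Ω}. Suppose u ∈ K satisfies the variational inequality a(u, v − u) ≥ ∫_D f·(v − u) dx for all v ∈ K. Then almost everywhere on Ω one has 0 ≤ (−Lu)(x) − f(x) ≤ ((−Lψ)(x) − f(x))⁺, where t⁺ := max(t, 0). -/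

import Mathlib

open MeasureTheory
open scoped ENNReal

namespace LSAux

variable {α : Type*} [MeasurableSpace α] {μ : Measure α}

/-- Products of two a.e.-square-integrable functions are integrable (AM–GM). -/
lemma mulIntOfSq {g h : α → ℝ} (hgm : AEStronglyMeasurable g μ) (hhm : AEStronglyMeasurable h μ)
    (hg : Integrable (fun x => g x ^ 2) μ) (hh : Integrable (fun x => h x ^ 2) μ) :
    Integrable (fun x => g x * h x) μ := by
  refine ((hg.add hh).div_const 2).mono' (hgm.mul hhm) (Filter.Eventually.of_forall fun x => ?_)
  simp only [Pi.add_apply]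
  rw [Real.norm_eq_abs, abs_mul]
  nlinarith [sq_nonneg (|g x| - |h x|), sq_abs (g x), sq_abs (h x), abs_nonneg (g x),
    abs_nonneg (h x)]

lemma mulInt {g h : α → ℝ} (hg : MemLp g 2 μ) (hh : MemLp h 2 μ) :
    Integrable (fun x => g x * h x) μ :=
  mulIntOfSq hg.aestronglyMeasurable hh.aestronglyMeasurable hg.integrable_sq hh.integrable_sq

/-- Integrability on the product of `p(x) γ(x,y)` for integrable `p` and a kernel whose
`y`-integral is a.e. bounded. -/
lemma intShapeA [SFinite μ] {γ : α → α → ℝ} (hγ : Measurable fun p : α × α => γ p.1 p.2)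
    (hγnn : ∀ x y, 0 ≤ γ x y) {C : ℝ≥0∞} (hC : C ≠ ⊤)
    (hCb : ∀ᵐ x ∂μ, ∫⁻ y, ENNReal.ofReal (γ x y) ∂μ ≤ C)
    {p : α → ℝ} (hp : Measurable p) (hpi : Integrable p μ) :
    Integrable (fun q : α × α => p q.1 * γ q.1 q.2) (μ.prod μ) := by
  have hm : Measurable fun q : α × α => p q.1 * γ q.1 q.2 := (hp.comp measurable_fst).mul hγ
  refine ⟨hm.aestronglyMeasurable, ?_⟩
  have hfub : ∫⁻ q, (‖p q.1 * γ q.1 q.2‖₊ : ℝ≥0∞) ∂(μ.prod μ)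
      = ∫⁻ x, ∫⁻ y, (‖p x * γ x y‖₊ : ℝ≥0∞) ∂μ ∂μ :=
    lintegral_prod _ hm.nnnorm.coe_nnreal_ennreal.aemeasurable
  have hbound : ∫⁻ x, ∫⁻ y, (‖p x * γ x y‖₊ : ℝ≥0∞) ∂μ ∂μ
      ≤ (∫⁻ x, (‖p x‖₊ : ℝ≥0∞) ∂μ) * C := by
    rw [← lintegral_mul_const'' C hp.nnnorm.coe_nnreal_ennreal.aemeasurable]
    refine lintegral_mono_ae ?_
    filter_upwards [hCb] with x hx
    calc ∫⁻ y, (‖p x * γ x y‖₊ : ℝ≥0∞) ∂μ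
        = ∫⁻ y, (‖p x‖₊ : ℝ≥0∞) * (‖γ x y‖₊ : ℝ≥0∞) ∂μ :=
          lintegral_congr fun y => by rw [nnnorm_mul, ENNReal.coe_mul]
      _ = (‖p x‖₊ : ℝ≥0∞) * ∫⁻ y, (‖γ x y‖₊ : ℝ≥0∞) ∂μ :=
          lintegral_const_mul _ (hγ.comp measurable_prodMk_left).nnnorm.coe_nnreal_ennreal
      _ = (‖p x‖₊ : ℝ≥0∞) * ∫⁻ y, ENNReal.ofReal (γ x y) ∂μ := by
          exact congrArg _ (lintegral_congr fun y => Real.enorm_eq_ofReal (hγnn x y))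
      _ ≤ (‖p x‖₊ : ℝ≥0∞) * C := mul_le_mul_right hx _
  have hfin : (∫⁻ x, (‖p x‖₊ : ℝ≥0∞) ∂μ) * C < ⊤ :=
    ENNReal.mul_lt_top hpi.2 hC.lt_top
  exact lt_of_le_of_lt (le_of_eq_of_le hfub hbound) hfin

lemma intShapeA' [SFinite μ] {γ : α → α → ℝ} (hγ : Measurable fun p : α × α => γ p.1 p.2)
    (hγsymm : ∀ x y, γ x y = γ y x)
    (hγnn : ∀ x y, 0 ≤ γ x y) {C : ℝ≥0∞} (hC : C ≠ ⊤)
    (hCb : ∀ᵐ x ∂μ, ∫⁻ y, ENNReal.ofReal (γ x y) ∂μ ≤ C)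
    {p : α → ℝ} (hp : Measurable p) (hpi : Integrable p μ) :
    Integrable (fun q : α × α => p q.2 * γ q.1 q.2) (μ.prod μ) := by
  have h := (intShapeA hγ hγnn hC hCb hp hpi).swap
  refine h.congr (Filter.Eventually.of_forall fun q => ?_)
  show p q.2 * γ q.2 q.1 = p q.2 * γ q.1 q.2
  rw [hγsymm q.2 q.1]

lemma intShapeB [SFinite μ] {γ : α → α → ℝ} (hγ : Measurable fun p : α × α => γ p.1 p.2)
    (hγsymm : ∀ x y, γ x y = γ y x)
    (hγnn : ∀ x y, 0 ≤ γ x y) {C : ℝ≥0∞} (hC : C ≠ ⊤)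
    (hCb : ∀ᵐ x ∂μ, ∫⁻ y, ENNReal.ofReal (γ x y) ∂μ ≤ C)
    {g h : α → ℝ} (hgm : Measurable g) (hg2 : MemLp g 2 μ)
    (hhm : Measurable h) (hh2 : MemLp h 2 μ) :
    Integrable (fun q : α × α => g q.1 * h q.2 * γ q.1 q.2) (μ.prod μ) := by
  have h1 : Integrable (fun q : α × α => g q.1 ^ 2 / 2 * γ q.1 q.2) (μ.prod μ) :=
    intShapeA hγ hγnn hC hCb ((hgm.pow_const 2).div_const 2) (hg2.integrable_sq.div_const 2)
  have h2 : Integrable (fun q : α × α => h q.2 ^ 2 / 2 * γ q.1 q.2) (μ.prod μ) :=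
    intShapeA' hγ hγsymm hγnn hC hCb ((hhm.pow_const 2).div_const 2)
      (hh2.integrable_sq.div_const 2)
  refine (h1.add h2).mono'
    ((((hgm.comp measurable_fst).mul (hhm.comp measurable_snd)).mul hγ).aestronglyMeasurable)
    (Filter.Eventually.of_forall fun q => ?_)
  simp only [Pi.add_apply]
  rw [Real.norm_eq_abs, abs_mul, abs_mul, abs_of_nonneg (hγnn q.1 q.2)]
  have hγq := hγnn q.1 q.2
  have h3 : |g q.1| * |h q.2| ≤ g q.1 ^ 2 / 2 + h q.2 ^ 2 / 2 := by
    nlinarith [sq_nonneg (|g q.1| - |h q.2|), sq_abs (g q.1), sq_abs (h q.2)]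
  nlinarith [mul_le_mul_of_nonneg_right h3 hγq]

end LSAux

/-- Theorem 4.4 (Lewy–Stampacchia dual estimates) for square-integrable kernels
(Case 2): if `u` solves the nonlocal obstacle variational inequality over
`K = {v ∈ L²(D) : v = 0 a.e. on D∖Ω, v ≥ ψ a.e. on Ω}`, then a.e. on `Ω` the
Lagrange multiplier `λ = -Lu - f` satisfies `0 ≤ λ ≤ (-Lψ - f)⁺`, where
`(-Lw)(x) = 2∫_D (w(x) - w(y)) γ(x,y) dy`. -/
theorem lewy_stampacchia_estimate
    (n : ℕ) (D Ω : Set (EuclideanSpace ℝ (Fin n)))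
    (hD : MeasurableSet D) (hDbdd : Bornology.IsBounded D)
    (hΩ : MeasurableSet Ω) (hΩD : Ω ⊆ D)
    (γ : EuclideanSpace ℝ (Fin n) → EuclideanSpace ℝ (Fin n) → ℝ)
    (hγmeas : Measurable
      fun p : EuclideanSpace ℝ (Fin n) × EuclideanSpace ℝ (Fin n) => γ p.1 p.2)
    (hγsymm : ∀ x y, γ x y = γ y x) (hγnn : ∀ x y, 0 ≤ γ x y)
    (γ₄ : ℝ) (hγ₄ : 0 < γ₄)
    (hγL2 : ∀ᵐ x ∂(volume.restrict D),
      ∫⁻ y in D, ENNReal.ofReal ((γ x y) ^ 2) ≤ ENNReal.ofReal (γ₄ ^ 2))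
    (α : ℝ) (hα : 0 < α)
    (hcoercive : ∀ w : EuclideanSpace ℝ (Fin n) → ℝ,
      MemLp w 2 (volume.restrict D) →
      (∀ᵐ x ∂(volume.restrict (D \ Ω)), w x = 0) →
      α * ∫ x in D, (w x) ^ 2
        ≤ ∫ x in D, ∫ y in D, (w x - w y) * (w x - w y) * γ x y)
    (f ψ : EuclideanSpace ℝ (Fin n) → ℝ)
    (hf : MemLp f 2 (volume.restrict D)) (hψ : MemLp ψ 2 (volume.restrict D))
    (hψ0 : ∀ᵐ x ∂(volume.restrict (D \ Ω)), ψ x ≤ 0)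
    (u : EuclideanSpace ℝ (Fin n) → ℝ) (hu : MemLp u 2 (volume.restrict D))
    (hu0 : ∀ᵐ x ∂(volume.restrict (D \ Ω)), u x = 0)
    (huK : ∀ᵐ x ∂(volume.restrict Ω), ψ x ≤ u x)
    (hvi : ∀ v : EuclideanSpace ℝ (Fin n) → ℝ,
      MemLp v 2 (volume.restrict D) →
      (∀ᵐ x ∂(volume.restrict (D \ Ω)), v x = 0) →
      (∀ᵐ x ∂(volume.restrict Ω), ψ x ≤ v x) →
      ∫ x in D, f x * (v x - u x)
        ≤ ∫ x in D, ∫ y in D, (u x - u y) * ((v x - u x) - (v y - u y)) * γ x y) :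
    ∀ᵐ x ∂(volume.restrict Ω),
      0 ≤ (2 * ∫ y in D, (u x - u y) * γ x y) - f x ∧
      (2 * ∫ y in D, (u x - u y) * γ x y) - f x
        ≤ max ((2 * ∫ y in D, (ψ x - ψ y) * γ x y) - f x) 0 := by
  classical
  set μ : Measure (EuclideanSpace ℝ (Fin n)) := volume.restrict D with hμdef
  -- basic measure facts
  have hDfin : volume D < ⊤ := hDbdd.measure_lt_top
  haveI : IsFiniteMeasure μ := ⟨by rw [hμdef, Measure.restrict_apply_univ]; exact hDfin⟩
  have hρΩ : μ.restrict Ω = volume.restrict Ω := by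
    rw [hμdef, Measure.restrict_restrict hΩ, Set.inter_eq_self_of_subset_left hΩD]
  have hρc : μ.restrict (D \ Ω) = volume.restrict (D \ Ω) := by
    rw [hμdef, Measure.restrict_restrict (hD.diff hΩ),
      Set.inter_eq_self_of_subset_left Set.diff_subset]
  have haeΩ : ∀ {P : EuclideanSpace ℝ (Fin n) → Prop},
      (∀ᵐ x ∂μ, P x) → ∀ᵐ x ∂(volume.restrict Ω), P x := by
    intro P h
    rw [← hρΩ]
    exact ae_mono Measure.restrict_le_self h
  have haec : ∀ {P : EuclideanSpace ℝ (Fin n) → Prop},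
      (∀ᵐ x ∂μ, P x) → ∀ᵐ x ∂(volume.restrict (D \ Ω)), P x := by
    intro P h
    rw [← hρc]
    exact ae_mono Measure.restrict_le_self h
  have hae_split : ∀ {P : EuclideanSpace ℝ (Fin n) → Prop},
      (∀ᵐ x ∂(volume.restrict Ω), P x) → (∀ᵐ x ∂(volume.restrict (D \ Ω)), P x) →
      ∀ᵐ x ∂μ, P x := by
    intro P h1 h2
    have hD' : μ = volume.restrict (Ω ∪ D \ Ω) := by
      rw [Set.union_diff_cancel hΩD, hμdef]
    rw [hD', Measure.restrict_union Set.disjoint_sdiff_right (hD.diff hΩ), ae_add_measure_iff]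
    exact ⟨h1, h2⟩
  -- measurable representatives
  obtain ⟨u', hu'm, huu'⟩ : ∃ u', Measurable u' ∧ u =ᵐ[μ] u' :=
    ⟨hu.1.mk u, hu.1.stronglyMeasurable_mk.measurable, hu.1.ae_eq_mk⟩
  obtain ⟨f', hf'm, hff'⟩ : ∃ f', Measurable f' ∧ f =ᵐ[μ] f' :=
    ⟨hf.1.mk f, hf.1.stronglyMeasurable_mk.measurable, hf.1.ae_eq_mk⟩
  obtain ⟨ψ', hψ'm, hψψ'⟩ : ∃ ψ', Measurable ψ' ∧ ψ =ᵐ[μ] ψ' :=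
    ⟨hψ.1.mk ψ, hψ.1.stronglyMeasurable_mk.measurable, hψ.1.ae_eq_mk⟩
  have hu' : MemLp u' 2 μ := hu.ae_eq huu'
  have hf' : MemLp f' 2 μ := hf.ae_eq hff'
  have hψ' : MemLp ψ' 2 μ := hψ.ae_eq hψψ'
  have hu0' : ∀ᵐ x ∂(volume.restrict (D \ Ω)), u' x = 0 := by
    filter_upwards [hu0, haec huu'] with x h1 h2
    rw [← h2]; exact h1
  have hψ0' : ∀ᵐ x ∂(volume.restrict (D \ Ω)), ψ' x ≤ 0 := by
    filter_upwards [hψ0, haec hψψ'] with x h1 h2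
    rw [← h2]; exact h1
  have huK' : ∀ᵐ x ∂(volume.restrict Ω), ψ' x ≤ u' x := by
    filter_upwards [huK, haeΩ huu', haeΩ hψψ'] with x h1 h2 h3
    rw [← h2, ← h3]; exact h1
  have hψu' : ∀ᵐ y ∂μ, ψ' y ≤ u' y := by
    refine hae_split huK' ?_
    filter_upwards [hψ0', hu0'] with x h1 h2
    rw [h2]; exact h1
  -- kernel bounds
  set C₀ : ℝ≥0∞ := ENNReal.ofReal (γ₄ ^ 2) + μ Set.univ with hC₀def
  have hC₀ : C₀ ≠ ⊤ := by
    rw [hC₀def]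
    exact ENNReal.add_ne_top.mpr ⟨ENNReal.ofReal_ne_top, (measure_ne_top μ _)⟩
  have hCb : ∀ᵐ x ∂μ, ∫⁻ y, ENNReal.ofReal (γ x y) ∂μ ≤ C₀ := by
    filter_upwards [hγL2] with x hx
    calc ∫⁻ y, ENNReal.ofReal (γ x y) ∂μ
        ≤ ∫⁻ y, (ENNReal.ofReal (γ x y ^ 2) + 1) ∂μ := by
          refine lintegral_mono fun y => ?_
          calc ENNReal.ofReal (γ x y)
              ≤ ENNReal.ofReal (γ x y ^ 2 + 1) :=
                ENNReal.ofReal_le_ofReal (by nlinarith [sq_nonneg (γ x y - 1)])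
            _ = ENNReal.ofReal (γ x y ^ 2) + 1 := by
                rw [ENNReal.ofReal_add (sq_nonneg _) zero_le_one, ENNReal.ofReal_one]
      _ = (∫⁻ y, ENNReal.ofReal (γ x y ^ 2) ∂μ) + μ Set.univ := by
          rw [lintegral_add_right _ measurable_const, lintegral_one]
      _ ≤ C₀ := by rw [hC₀def]; exact add_le_add hx le_rfl
  -- slice integrability facts
  have hslice : ∀ᵐ x ∂μ, Integrable (fun y => γ x y) μ ∧
      Integrable (fun y => u' y * γ x y) μ ∧ Integrable (fun y => ψ' y * γ x y) μ := by
    filter_upwards [hCb, hγL2] with x h1 h2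
    have hmx : Measurable (γ x) := hγmeas.comp measurable_prodMk_left
    have hγ1 : Integrable (fun y => γ x y) μ := by
      refine ⟨hmx.aestronglyMeasurable, ?_⟩
      have : ∫⁻ y, (‖γ x y‖₊ : ℝ≥0∞) ∂μ = ∫⁻ y, ENNReal.ofReal (γ x y) ∂μ :=
        lintegral_congr fun y => Real.enorm_eq_ofReal (hγnn x y)
      exact lt_of_le_of_lt (le_of_eq_of_le this h1) hC₀.lt_top
    have hγ2 : Integrable (fun y => γ x y ^ 2) μ := by
      refine ⟨(hmx.pow_const 2).aestronglyMeasurable, ?_⟩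
      have : ∫⁻ y, (‖γ x y ^ 2‖₊ : ℝ≥0∞) ∂μ = ∫⁻ y, ENNReal.ofReal (γ x y ^ 2) ∂μ :=
        lintegral_congr fun y => Real.enorm_eq_ofReal (sq_nonneg _)
      exact lt_of_le_of_lt (le_of_eq_of_le this h2) ENNReal.ofReal_lt_top
    exact ⟨hγ1,
      LSAux.mulIntOfSq hu'.aestronglyMeasurable hmx.aestronglyMeasurable hu'.integrable_sq hγ2,
      LSAux.mulIntOfSq hψ'.aestronglyMeasurable hmx.aestronglyMeasurable hψ'.integrable_sq hγ2⟩
  -- the linear functional ℓ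
  set ℓ : EuclideanSpace ℝ (Fin n) → ℝ := fun x => ∫ y, (u' x - u' y) * γ x y ∂μ with hℓdef
  have huint : Integrable u' μ := hu'.integrable one_le_two
  have hfint : Integrable f' μ := hf'.integrable one_le_two
  have hG₀ : Integrable (fun q : (EuclideanSpace ℝ (Fin n)) × (EuclideanSpace ℝ (Fin n)) =>
      (u' q.1 - u' q.2) * γ q.1 q.2) (μ.prod μ) := by
    have h1 := LSAux.intShapeA hγmeas hγnn hC₀ hCb hu'm huint
    have h2 := LSAux.intShapeA' hγmeas hγsymm hγnn hC₀ hCb hu'm huint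
    exact (h1.sub h2).congr (Filter.Eventually.of_forall fun q => by simp only [Pi.sub_apply, Pi.add_apply]; ring)
  have hℓint : Integrable ℓ μ := by
    have := hG₀.integral_prod_left
    exact this
  -- the key identity : a(u,φ) = ∫ (-Lu) φ
  have hkey : ∀ φ : EuclideanSpace ℝ (Fin n) → ℝ, Measurable φ → MemLp φ 2 μ →
      (∫ x, ∫ y, (u' x - u' y) * (φ x - φ y) * γ x y ∂μ ∂μ)
        = ∫ x, (2 * ℓ x) * φ x ∂μ
      ∧ Integrable (fun x => ℓ x * φ x) μ := by
    intro φ hφm hφ2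
    have huφ : Integrable (fun x => u' x * φ x) μ := LSAux.mulInt hu' hφ2
    have hG : Integrable (fun q : (EuclideanSpace ℝ (Fin n)) × (EuclideanSpace ℝ (Fin n)) =>
        (u' q.1 - u' q.2) * φ q.1 * γ q.1 q.2) (μ.prod μ) := by
      have h1 := LSAux.intShapeA hγmeas hγnn hC₀ hCb (hu'm.mul hφm) huφ
      have h2 := LSAux.intShapeB hγmeas hγsymm hγnn hC₀ hCb hφm hφ2 hu'm hu'
      exact (h1.sub h2).congr (Filter.Eventually.of_forall fun q => by simp only [Pi.sub_apply, Pi.add_apply, Pi.mul_apply]; ring)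
    have hH : Integrable (fun q : (EuclideanSpace ℝ (Fin n)) × (EuclideanSpace ℝ (Fin n)) =>
        (u' q.1 - u' q.2) * φ q.2 * γ q.1 q.2) (μ.prod μ) := by
      have h1 := LSAux.intShapeB hγmeas hγsymm hγnn hC₀ hCb hu'm hu' hφm hφ2
      have h2 := LSAux.intShapeA' hγmeas hγsymm hγnn hC₀ hCb (hu'm.mul hφm) huφ
      exact (h1.sub h2).congr (Filter.Eventually.of_forall fun q => by simp only [Pi.sub_apply, Pi.add_apply, Pi.mul_apply]; ring)
    have hF : Integrable (fun q : (EuclideanSpace ℝ (Fin n)) × (EuclideanSpace ℝ (Fin n)) =>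
        (u' q.1 - u' q.2) * (φ q.1 - φ q.2) * γ q.1 q.2) (μ.prod μ) :=
      (hG.sub hH).congr (Filter.Eventually.of_forall fun q => by simp only [Pi.sub_apply, Pi.add_apply]; ring)
    have hswap : (∫ q : (EuclideanSpace ℝ (Fin n)) × (EuclideanSpace ℝ (Fin n)),
          (u' q.1 - u' q.2) * φ q.2 * γ q.1 q.2 ∂(μ.prod μ))
        = - ∫ q : (EuclideanSpace ℝ (Fin n)) × (EuclideanSpace ℝ (Fin n)),
            (u' q.1 - u' q.2) * φ q.1 * γ q.1 q.2 ∂(μ.prod μ) := by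
      have h := integral_prod_swap (μ := μ) (ν := μ)
        (fun q : (EuclideanSpace ℝ (Fin n)) × (EuclideanSpace ℝ (Fin n)) =>
          (u' q.1 - u' q.2) * φ q.2 * γ q.1 q.2)
      rw [← h, ← integral_neg]
      refine integral_congr_ae (Filter.Eventually.of_forall fun q => ?_)
      show (u' q.2 - u' q.1) * φ q.1 * γ q.2 q.1 = _
      rw [hγsymm q.2 q.1]; ring
    have hinner : ∀ x, (∫ y, (u' x - u' y) * φ x * γ x y ∂μ) = ℓ x * φ x := by
      intro x
      calc ∫ y, (u' x - u' y) * φ x * γ x y ∂μ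
          = ∫ y, φ x * ((u' x - u' y) * γ x y) ∂μ :=
            integral_congr_ae (Filter.Eventually.of_forall fun y => by simp only [Pi.sub_apply]; ring)
        _ = φ x * ∫ y, (u' x - u' y) * γ x y ∂μ := integral_const_mul _ _
        _ = ℓ x * φ x := by rw [hℓdef]; ring
    have hGval : (∫ q : (EuclideanSpace ℝ (Fin n)) × (EuclideanSpace ℝ (Fin n)),
          (u' q.1 - u' q.2) * φ q.1 * γ q.1 q.2 ∂(μ.prod μ))
        = ∫ x, ℓ x * φ x ∂μ := by
      rw [integral_prod _ hG]
      exact integral_congr_ae (Filter.Eventually.of_forall fun x => hinner x)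
    constructor
    · calc ∫ x, ∫ y, (u' x - u' y) * (φ x - φ y) * γ x y ∂μ ∂μ
          = ∫ q : (EuclideanSpace ℝ (Fin n)) × (EuclideanSpace ℝ (Fin n)),
              (u' q.1 - u' q.2) * (φ q.1 - φ q.2) * γ q.1 q.2 ∂(μ.prod μ) :=
            (integral_prod _ hF).symm
        _ = ∫ q : (EuclideanSpace ℝ (Fin n)) × (EuclideanSpace ℝ (Fin n)),
              ((u' q.1 - u' q.2) * φ q.1 * γ q.1 q.2
                - (u' q.1 - u' q.2) * φ q.2 * γ q.1 q.2) ∂(μ.prod μ) :=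
            integral_congr_ae (Filter.Eventually.of_forall fun q => by simp only [Pi.sub_apply, Pi.add_apply]; ring)
        _ = (∫ q : (EuclideanSpace ℝ (Fin n)) × (EuclideanSpace ℝ (Fin n)),
              (u' q.1 - u' q.2) * φ q.1 * γ q.1 q.2 ∂(μ.prod μ))
            - ∫ q : (EuclideanSpace ℝ (Fin n)) × (EuclideanSpace ℝ (Fin n)),
              (u' q.1 - u' q.2) * φ q.2 * γ q.1 q.2 ∂(μ.prod μ) := integral_sub hG hH
        _ = 2 * ∫ q : (EuclideanSpace ℝ (Fin n)) × (EuclideanSpace ℝ (Fin n)),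
              (u' q.1 - u' q.2) * φ q.1 * γ q.1 q.2 ∂(μ.prod μ) := by rw [hswap]; ring
        _ = 2 * ∫ x, ℓ x * φ x ∂μ := by rw [hGval]
        _ = ∫ x, (2 * ℓ x) * φ x ∂μ := by
            rw [← integral_const_mul]
            exact integral_congr_ae (Filter.Eventually.of_forall fun x => by simp only [Pi.sub_apply, Pi.add_apply]; ring)
    · have := hG.integral_prod_left
      exact this.congr (Filter.Eventually.of_forall fun x => hinner x)
  -- transfer the variational inequality to the measurable representatives
  have hvi' : ∀ v : EuclideanSpace ℝ (Fin n) → ℝ, MemLp v 2 μ →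
      (∀ᵐ x ∂(volume.restrict (D \ Ω)), v x = 0) →
      (∀ᵐ x ∂(volume.restrict Ω), ψ' x ≤ v x) →
      ∫ x, f' x * (v x - u' x) ∂μ
        ≤ ∫ x, ∫ y, (u' x - u' y) * ((v x - u' x) - (v y - u' y)) * γ x y ∂μ ∂μ := by
    intro v hv h0 hK
    have hK' : ∀ᵐ x ∂(volume.restrict Ω), ψ x ≤ v x := by
      filter_upwards [hK, haeΩ hψψ'] with x h1 h2
      rw [h2]; exact h1
    have h := hvi v hv h0 hK'
    have e1 : ∫ x, f x * (v x - u x) ∂μ = ∫ x, f' x * (v x - u' x) ∂μ := by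
      refine integral_congr_ae ?_
      filter_upwards [huu', hff'] with x h1 h2
      rw [h1, h2]
    have e2 : (∫ x, ∫ y, (u x - u y) * ((v x - u x) - (v y - u y)) * γ x y ∂μ ∂μ)
        = ∫ x, ∫ y, (u' x - u' y) * ((v x - u' x) - (v y - u' y)) * γ x y ∂μ ∂μ := by
      refine integral_congr_ae ?_
      filter_upwards [huu'] with x hx
      refine integral_congr_ae ?_
      filter_upwards [huu'] with y hy
      rw [hx, hy]
    rw [← e1, ← e2]
    exact h
  -- lower bound: the multiplier is nonnegative on Ω
  have hlamint : Integrable (fun x => 2 * ℓ x - f' x) μ :=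
    (hℓint.const_mul 2).sub hfint
  have hE : ∀ E : Set (EuclideanSpace ℝ (Fin n)), MeasurableSet E → E ⊆ Ω →
      0 ≤ ∫ x, (2 * ℓ x - f' x) ∂(μ.restrict E) := by
    intro E hEm hEΩ
    set χ : EuclideanSpace ℝ (Fin n) → ℝ := E.indicator fun _ => (1 : ℝ) with hχdef
    have hχm : Measurable χ := measurable_const.indicator hEm
    have hχ2 : MemLp χ 2 μ := memLp_indicator_const 2 hEm 1 (Or.inr (measure_ne_top μ E))
    have hv2 : MemLp (fun x => u' x + χ x) 2 μ := hu'.add hχ2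
    have hv0 : ∀ᵐ x ∂(volume.restrict (D \ Ω)), u' x + χ x = 0 := by
      filter_upwards [hu0', ae_restrict_mem (hD.diff hΩ)] with x h1 h2
      have : χ x = 0 := Set.indicator_of_notMem (fun hx => h2.2 (hEΩ hx)) _
      rw [h1, this, add_zero]
    have hvK : ∀ᵐ x ∂(volume.restrict Ω), ψ' x ≤ u' x + χ x := by
      filter_upwards [huK'] with x h1
      have : (0 : ℝ) ≤ χ x := Set.indicator_nonneg (fun _ _ => zero_le_one) x
      linarith
    have h := hvi' _ hv2 hv0 hvK
    simp only [add_sub_cancel_left] at h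
    have h2 : ∫ x, f' x * χ x ∂μ ≤ ∫ x, (2 * ℓ x) * χ x ∂μ :=
      h.trans_eq (hkey χ hχm hχ2).1
    have e1 : ∫ x, f' x * χ x ∂μ = ∫ x, f' x ∂(μ.restrict E) := by
      rw [← integral_indicator hEm]
      refine integral_congr_ae (Filter.Eventually.of_forall fun x => ?_)
      by_cases hx : x ∈ E <;>
        simp [hχdef, Set.indicator_of_mem, Set.indicator_of_notMem, hx]
    have e2 : ∫ x, (2 * ℓ x) * χ x ∂μ = ∫ x, 2 * ℓ x ∂(μ.restrict E) := by
      rw [← integral_indicator hEm]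
      refine integral_congr_ae (Filter.Eventually.of_forall fun x => ?_)
      by_cases hx : x ∈ E <;>
        simp [hχdef, Set.indicator_of_mem, Set.indicator_of_notMem, hx]
    rw [e1, e2] at h2
    rw [integral_sub ((hℓint.const_mul 2).restrict) hfint.restrict]
    linarith
  have hlow : 0 ≤ᵐ[volume.restrict Ω] fun x => 2 * ℓ x - f' x := by
    rw [← hρΩ]
    refine ae_nonneg_of_forall_setIntegral_nonneg hlamint.restrict ?_
    intro s hs _
    rw [Measure.restrict_restrict hs]
    exact hE (s ∩ Ω) (hs.inter hΩ) Set.inter_subset_right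
  -- complementarity
  have hφ₂m : Measurable fun x => Ω.indicator ψ' x - u' x := (hψ'm.indicator hΩ).sub hu'm
  have hφ₂2 : MemLp (fun x => Ω.indicator ψ' x - u' x) 2 μ := (hψ'.indicator hΩ).sub hu'
  have hv0₂ : ∀ᵐ x ∂(volume.restrict (D \ Ω)), Ω.indicator ψ' x = 0 := by
    filter_upwards [ae_restrict_mem (hD.diff hΩ)] with x hx
    exact Set.indicator_of_notMem hx.2 _
  have hvK₂ : ∀ᵐ x ∂(volume.restrict Ω), ψ' x ≤ Ω.indicator ψ' x := by
    filter_upwards [ae_restrict_mem hΩ] with x hx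
    rw [Set.indicator_of_mem hx]
  have h₂ := hvi' (Ω.indicator ψ') ((hψ'.indicator hΩ)) hv0₂ hvK₂
  have h₂' : ∫ x, f' x * (Ω.indicator ψ' x - u' x) ∂μ
      ≤ ∫ x, (2 * ℓ x) * (Ω.indicator ψ' x - u' x) ∂μ :=
    h₂.trans_eq (hkey _ hφ₂m hφ₂2).1
  have hA : Integrable (fun x => (2 * ℓ x) * (Ω.indicator ψ' x - u' x)) μ :=
    (((hkey _ hφ₂m hφ₂2).2).const_mul 2).congr
      (Filter.Eventually.of_forall fun x => by simp only [Pi.sub_apply, Pi.add_apply]; ring)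
  have hB : Integrable (fun x => f' x * (Ω.indicator ψ' x - u' x)) μ :=
    LSAux.mulInt hf' hφ₂2
  have hcompInt : Integrable (fun x => (2 * ℓ x - f' x) * (Ω.indicator ψ' x - u' x)) μ :=
    (hA.sub hB).congr (Filter.Eventually.of_forall fun x => by simp only [Pi.sub_apply, Pi.add_apply]; ring)
  have hge : 0 ≤ ∫ x, (2 * ℓ x - f' x) * (Ω.indicator ψ' x - u' x) ∂μ := by
    have hsplit : ∫ x, (2 * ℓ x - f' x) * (Ω.indicator ψ' x - u' x) ∂μ
        = (∫ x, (2 * ℓ x) * (Ω.indicator ψ' x - u' x) ∂μ)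
          - ∫ x, f' x * (Ω.indicator ψ' x - u' x) ∂μ := by
      rw [← integral_sub hA hB]
      exact integral_congr_ae (Filter.Eventually.of_forall fun x => by simp only [Pi.sub_apply, Pi.add_apply]; ring)
    rw [hsplit]
    linarith
  have hnonpos : (fun x => (2 * ℓ x - f' x) * (Ω.indicator ψ' x - u' x)) ≤ᵐ[μ] 0 := by
    refine hae_split ?_ ?_
    · filter_upwards [hlow, huK', ae_restrict_mem hΩ] with x h1 h2 h3
      have hφx : Ω.indicator ψ' x - u' x ≤ 0 := by
        rw [Set.indicator_of_mem h3]; linarith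
      have h1' : (0 : ℝ) ≤ 2 * ℓ x - f' x := h1
      simpa using mul_nonpos_iff.mpr (Or.inl ⟨h1', hφx⟩)
    · filter_upwards [hu0', ae_restrict_mem (hD.diff hΩ)] with x h1 h2
      have : Ω.indicator ψ' x = 0 := Set.indicator_of_notMem h2.2 _
      simp [this, h1]
  have hzero : ∀ᵐ x ∂μ, (2 * ℓ x - f' x) * (Ω.indicator ψ' x - u' x) = 0 := by
    have hle : ∫ x, (2 * ℓ x - f' x) * (Ω.indicator ψ' x - u' x) ∂μ ≤ 0 :=
      integral_nonpos_of_ae hnonpos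
    have heq : ∫ x, (2 * ℓ x - f' x) * (Ω.indicator ψ' x - u' x) ∂μ = 0 :=
      le_antisymm hle hge
    have h0g : (fun x => -((2 * ℓ x - f' x) * (Ω.indicator ψ' x - u' x))) =ᵐ[μ] 0 :=
      (integral_eq_zero_iff_of_nonneg_ae
        (by filter_upwards [hnonpos] with x hx; simpa [Pi.neg_apply] using neg_nonneg.mpr hx)
        hcompInt.neg).mp (by simp only [Pi.neg_apply]; rw [integral_neg, heq, neg_zero])
    filter_upwards [h0g] with x hx
    have : -((2 * ℓ x - f' x) * (Ω.indicator ψ' x - u' x)) = 0 := hx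
    linarith
  have hcomplΩ : ∀ᵐ x ∂(volume.restrict Ω), (2 * ℓ x - f' x) * (ψ' x - u' x) = 0 := by
    filter_upwards [haeΩ hzero, ae_restrict_mem hΩ] with x h1 h2
    rwa [Set.indicator_of_mem h2] at h1
  -- final pointwise argument on Ω (with measurable representatives)
  have main : ∀ᵐ x ∂(volume.restrict Ω),
      0 ≤ 2 * ℓ x - f' x ∧
      2 * ℓ x - f' x ≤ max (2 * (∫ y, (ψ' x - ψ' y) * γ x y ∂μ) - f' x) 0 := by
    filter_upwards [hlow, hcomplΩ, haeΩ hslice] with x h0 hc hsl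
    have h0' : (0 : ℝ) ≤ 2 * ℓ x - f' x := h0
    refine ⟨h0', ?_⟩
    rcases mul_eq_zero.mp hc with h | h
    · rw [h]; exact le_max_right _ _
    · have hux : ψ' x = u' x := by
        have := sub_eq_zero.mp h; linarith
      obtain ⟨hγx, huγx, hψγx⟩ := hsl
      have hint1 : Integrable (fun y => (u' x - u' y) * γ x y) μ :=
        ((hγx.const_mul (u' x)).sub huγx).congr
          (Filter.Eventually.of_forall fun y => by simp only [Pi.sub_apply]; ring)
      have hint2 : Integrable (fun y => (ψ' x - ψ' y) * γ x y) μ :=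
        ((hγx.const_mul (ψ' x)).sub hψγx).congr
          (Filter.Eventually.of_forall fun y => by simp only [Pi.sub_apply]; ring)
      have hle : ℓ x ≤ ∫ y, (ψ' x - ψ' y) * γ x y ∂μ := by
        rw [hℓdef]
        refine integral_mono_ae hint1 hint2 ?_
        filter_upwards [hψu'] with y hy
        have := hγnn x y
        rw [hux]
        exact mul_le_mul_of_nonneg_right (by linarith) this
      have := le_max_left (2 * (∫ y, (ψ' x - ψ' y) * γ x y ∂μ) - f' x) (0 : ℝ)
      linarith
  -- transfer back to the original functions
  filter_upwards [main, haeΩ huu', haeΩ hff', haeΩ hψψ'] with x hm h1 h2 h3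
  have e1 : (∫ y, (u x - u y) * γ x y ∂μ) = ℓ x := by
    rw [hℓdef, h1]
    refine integral_congr_ae ?_
    filter_upwards [huu'] with y hy
    rw [hy]
  have e2 : (∫ y, (ψ x - ψ y) * γ x y ∂μ) = ∫ y, (ψ' x - ψ' y) * γ x y ∂μ := by
    rw [h3]
    refine integral_congr_ae ?_
    filter_upwards [hψψ'] with y hy
    rw [hy]
  refine ⟨?_, ?_⟩
  · rw [e1, h2]; exact hm.1
  · rw [e1, e2, h2]; exact hm.2
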